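/- Let λ, μ > 0 and set ρ = λ/μ. Let X and S be independent random variables with X exponentially distributed with rate λ and S uniformly distributed on the interval (0, 2/μ). Then E[(X+S)²]/(2(E[X]+E[S])) + E[S] = (3+6ρ+5ρ²)/(3λ(1+ρ)). (This is the average age-upon-decisions of the M/U/1/1-M bufferless system.) -/

import Mathlib

open MeasureTheory ProbabilityTheory Real
open Set
open scoped ENNReal NNReal

lemma exponentialPDFReal_eq' (r x : ℝ) :
    exponentialPDFReal r x = if 0 ≤ x then r * exp (-(r * x)) else 0 := by
  rw [exponentialPDFReal, gammaPDFReal]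
  simp only [rpow_one, Real.Gamma_one, div_one, sub_self, rpow_zero, mul_one]

lemma expMeasure_eq_withDensity (r : ℝ) :
    expMeasure r = volume.withDensity fun x => ((exponentialPDFReal r x).toNNReal : ℝ≥0∞) := rfl

lemma integral_expMeasure {r : ℝ} (hr : 0 < r) (g : ℝ → ℝ) :
    ∫ x, g x ∂(expMeasure r) = ∫ x in Ioi (0:ℝ), g x * (r * exp (-(r * x))) := by
  rw [expMeasure_eq_withDensity,
    integral_withDensity_eq_integral_smul ((measurable_exponentialPDFReal r).real_toNNReal) g]
  have h : ∀ x, (exponentialPDFReal r x).toNNReal • g x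
      = Set.indicator (Ici (0:ℝ)) (fun x => g x * (r * exp (-(r * x)))) x := by
    intro x
    rw [NNReal.smul_def, smul_eq_mul, Real.coe_toNNReal _ (exponentialPDFReal_nonneg hr x),
      exponentialPDFReal_eq']
    by_cases hx : 0 ≤ x
    · simp [Set.indicator_apply, hx, mul_comm]
    · simp [Set.indicator_apply, hx]
  simp_rw [h]
  rw [integral_indicator measurableSet_Ici, integral_Ici_eq_integral_Ioi]

lemma integrableOn_pow_mul_exp {r : ℝ} (hr : 0 < r) (n : ℕ) :
    IntegrableOn (fun x : ℝ => x ^ n * (r * exp (-(r * x)))) (Ioi 0) := by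
  have h := integrableOn_rpow_mul_exp_neg_mul_rpow (s := (n:ℝ)) (p := 1) (b := r)
    (neg_one_lt_zero.trans_le (Nat.cast_nonneg n)) one_pos hr
  have h2 : IntegrableOn (fun x : ℝ => r * (x ^ (n:ℝ) * exp (-r * x ^ (1:ℝ)))) (Ioi 0) :=
    h.const_mul r
  apply IntegrableOn.congr_fun h2 ?_ measurableSet_Ioi
  intro x hx
  simp only [rpow_one, rpow_natCast, neg_mul]
  ring

lemma integrable_pow_expMeasure {r : ℝ} (hr : 0 < r) (n : ℕ) :
    Integrable (fun x : ℝ => x ^ n) (expMeasure r) := by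
  rw [expMeasure_eq_withDensity,
    integrable_withDensity_iff_integrable_smul ((measurable_exponentialPDFReal r).real_toNNReal)]
  have h : ∀ x : ℝ, (exponentialPDFReal r x).toNNReal • (x ^ n)
      = Set.indicator (Ici (0:ℝ)) (fun x => x ^ n * (r * exp (-(r * x)))) x := by
    intro x
    rw [NNReal.smul_def, smul_eq_mul, Real.coe_toNNReal _ (exponentialPDFReal_nonneg hr x),
      exponentialPDFReal_eq']
    by_cases hx : 0 ≤ x
    · simp [Set.indicator_apply, hx, mul_comm]
    · simp [Set.indicator_apply, hx]
  simp_rw [h]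
  rw [integrable_indicator_iff measurableSet_Ici]
  rw [integrableOn_Ici_iff_integrableOn_Ioi]
  exact integrableOn_pow_mul_exp hr n

lemma exp_moment_one {r : ℝ} (hr : 0 < r) :
    ∫ x in Ioi (0:ℝ), x * (r * exp (-(r * x))) = 1 / r := by
  have h := integral_rpow_mul_exp_neg_mul_Ioi (a := 2) (r := r) two_pos hr
  have h2 : ∫ x in Ioi (0:ℝ), x * (r * exp (-(r * x)))
      = r * ∫ t in Ioi (0:ℝ), t ^ ((2:ℝ) - 1) * exp (-(r * t)) := by
    rw [← integral_const_mul]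
    apply setIntegral_congr_fun measurableSet_Ioi
    intro x hx
    simp only [show (2:ℝ) - 1 = 1 by norm_num, rpow_one]
    ring
  rw [h2, h, Real.Gamma_two, mul_one]
  rw [show ((1:ℝ)/r) ^ (2:ℝ) = (1/r)^(2:ℕ) by rw [← rpow_natCast]; norm_num]
  field_simp

lemma exp_moment_two {r : ℝ} (hr : 0 < r) :
    ∫ x in Ioi (0:ℝ), x ^ 2 * (r * exp (-(r * x))) = 2 / r ^ 2 := by
  have h := integral_rpow_mul_exp_neg_mul_Ioi (a := 3) (r := r) three_pos hr
  have hG : Real.Gamma 3 = 2 := by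
    rw [show (3:ℝ) = (2:ℕ) + 1 by norm_num, Real.Gamma_nat_eq_factorial]
    norm_num
  have h2 : ∫ x in Ioi (0:ℝ), x ^ 2 * (r * exp (-(r * x)))
      = r * ∫ t in Ioi (0:ℝ), t ^ ((3:ℝ) - 1) * exp (-(r * t)) := by
    rw [← integral_const_mul]
    apply setIntegral_congr_fun measurableSet_Ioi
    intro x hx
    simp only [show (3:ℝ) - 1 = ((2:ℕ):ℝ) by norm_num, rpow_natCast]
    ring
  rw [h2, h, hG]
  rw [show ((1:ℝ)/r) ^ (3:ℝ) = (1/r)^(3:ℕ) by rw [← rpow_natCast]; norm_num]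
  field_simp

lemma unif_moment (c : ℝ) (hc : 0 < c) (n : ℕ) :
    ∫ x in Ioo (0:ℝ) c, x ^ n = c ^ (n + 1) / (n + 1) := by
  rw [← integral_Ioc_eq_integral_Ioo, ← intervalIntegral.integral_of_le hc.le,
    integral_pow]
  simp

lemma unif_integrable (c : ℝ) (d : ℝ≥0∞) (hd : d ≠ ⊤) (n : ℕ) :
    Integrable (fun x : ℝ => x ^ n) (d • volume.restrict (Ioo (0:ℝ) c)) := by
  apply Integrable.smul_measure _ hd
  exact ((continuous_pow n).integrableOn_Icc).mono_set Ioo_subset_Icc_self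


/-- The average age-upon-decisions of the M/U/1/1-M bufferless system:
`X` exponential with rate `lam`, `S` uniform on `(0, 2/mu)`, independent; with `ρ = lam/mu`,
`E[(X+S)²]/(2(E[X]+E[S])) + E[S] = (3+6ρ+5ρ²)/(3·lam·(1+ρ))`. -/
theorem stmt_1 {Ω : Type*} [MeasurableSpace Ω] (P : Measure Ω) [IsProbabilityMeasure P]
    (lam mu rho : ℝ) (hlam : 0 < lam) (hmu : 0 < mu) (hrho : rho = lam / mu)
    (X S : Ω → ℝ) (hX : Measurable X) (hS : Measurable S)
    (hindep : IndepFun X S P)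
    (hXdist : Measure.map X P = expMeasure lam)
    (hSdist : Measure.map S P
      = (ENNReal.ofReal (mu / 2)) • volume.restrict (Set.Ioo (0 : ℝ) (2 / mu))) :
    (∫ ω, (X ω + S ω) ^ 2 ∂P) / (2 * ((∫ ω, X ω ∂P) + ∫ ω, S ω ∂P)) + (∫ ω, S ω ∂P)
      = (3 + 6 * rho + 5 * rho ^ 2) / (3 * lam * (1 + rho)) := by
  have hmapX : ∀ n : ℕ, ∫ ω, X ω ^ n ∂P = ∫ x, x ^ n ∂(Measure.map X P) := fun n =>
    (integral_map hX.aemeasurable (measurable_id.pow_const n).aestronglyMeasurable).symm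
  have hmapS : ∀ n : ℕ, ∫ ω, S ω ^ n ∂P = ∫ x, x ^ n ∂(Measure.map S P) := fun n =>
    (integral_map hS.aemeasurable (measurable_id.pow_const n).aestronglyMeasurable).symm
  -- exponential moments
  have hEXn : ∀ n : ℕ, ∫ ω, X ω ^ n ∂P = ∫ x in Ioi (0:ℝ), x ^ n * (lam * exp (-(lam * x))) := by
    intro n; rw [hmapX n, hXdist, integral_expMeasure hlam]
  have hEX : ∫ ω, X ω ∂P = 1 / lam := by
    have := hEXn 1
    simp only [pow_one] at this
    rw [this, exp_moment_one hlam]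
  have hEX2 : ∫ ω, X ω ^ 2 ∂P = 2 / lam ^ 2 := by
    rw [hEXn 2, exp_moment_two hlam]
  -- uniform moments
  have hc : (0:ℝ) < 2 / mu := by positivity
  have hESn : ∀ n : ℕ, ∫ ω, S ω ^ n ∂P
      = (mu / 2) * ((2 / mu) ^ (n + 1) / (n + 1)) := by
    intro n
    rw [hmapS n, hSdist, integral_smul_measure, ENNReal.toReal_ofReal (by positivity),
      unif_moment _ hc n, smul_eq_mul]
  have hES : ∫ ω, S ω ∂P = 1 / mu := by
    have := hESn 1
    simp only [pow_one] at this
    rw [this]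
    field_simp [hmu.ne']
    ring_nf
    rw [← mul_pow, mul_inv_cancel₀ hmu.ne']
    ring
  have hES2 : ∫ ω, S ω ^ 2 ∂P = 4 / (3 * mu ^ 2) := by
    rw [hESn 2]
    field_simp [hmu.ne']
    ring_nf
    rw [← mul_pow, mul_inv_cancel₀ hmu.ne']
    ring
  -- integrability
  have hiX : Integrable X P := by
    have : Integrable (fun x : ℝ => x ^ 1) (Measure.map X P) := by
      rw [hXdist]; exact integrable_pow_expMeasure hlam 1
    simp only [pow_one] at this
    exact (integrable_map_measure this.aestronglyMeasurable hX.aemeasurable).mp this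
  have hiX2 : Integrable (fun ω => X ω ^ 2) P := by
    have : Integrable (fun x : ℝ => x ^ 2) (Measure.map X P) := by
      rw [hXdist]; exact integrable_pow_expMeasure hlam 2
    exact (integrable_map_measure this.aestronglyMeasurable hX.aemeasurable).mp this
  have hiS : Integrable S P := by
    have : Integrable (fun x : ℝ => x ^ 1) (Measure.map S P) := by
      rw [hSdist]; exact unif_integrable (2 / mu) _ ENNReal.ofReal_ne_top 1
    simp only [pow_one] at this
    exact (integrable_map_measure this.aestronglyMeasurable hS.aemeasurable).mp this
  have hiS2 : Integrable (fun ω => S ω ^ 2) P := by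
    have : Integrable (fun x : ℝ => x ^ 2) (Measure.map S P) := by
      rw [hSdist]; exact unif_integrable (2 / mu) _ ENNReal.ofReal_ne_top 2
    exact (integrable_map_measure this.aestronglyMeasurable hS.aemeasurable).mp this
  have hiXS : Integrable (fun ω => X ω * S ω) P := hindep.integrable_mul hiX hiS
  have hEXS : ∫ ω, X ω * S ω ∂P = (1 / lam) * (1 / mu) := by
    have := hindep.integral_mul_eq_mul_integral hX.aestronglyMeasurable hS.aestronglyMeasurable
    have h' : ∫ ω, X ω * S ω ∂P = (∫ ω, X ω ∂P) * ∫ ω, S ω ∂P := this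
    rw [h', hEX, hES]
  -- expand the square
  have hexpand : ∫ ω, (X ω + S ω) ^ 2 ∂P
      = 2 / lam ^ 2 + 2 * ((1 / lam) * (1 / mu)) + 4 / (3 * mu ^ 2) := by
    have h1 : ∫ ω, (X ω + S ω) ^ 2 ∂P
        = ∫ ω, (X ω ^ 2 + (2 * (X ω * S ω) + S ω ^ 2)) ∂P := by
      apply integral_congr_ae
      filter_upwards with ω
      ring
    have hgg : Integrable (fun ω => 2 * (X ω * S ω) + S ω ^ 2) P := (hiXS.const_mul 2).add hiS2
    rw [h1, integral_add hiX2 hgg, integral_add (hiXS.const_mul 2) hiS2,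
      integral_const_mul, hEX2, hEXS, hES2]
    ring
  rw [hexpand, hEX, hES, hrho]
  have h1 : lam ≠ 0 := hlam.ne'
  have h2 : mu ≠ 0 := hmu.ne'
  have h3 : lam + mu ≠ 0 := by positivity
  have h4 : mu + lam ≠ 0 := by positivity
  field_simp
  ring
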